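/- For a real 2k×2k symmetric matrix M with all entries of absolute value at most m_max, |Haf(M)| ≤ √2 · (2k·m_max/e)^k. If additionally all entries of M are at least m_min > 0, then Haf(M) ≥ √2 · e^{1/25 - 1/12} · (2k·m_min/e)^k. -/

import Mathlib

/-- The hafnian of an `n × n` real matrix (`0` when `n` is odd, `1` for the empty matrix):
`Haf(M) = (1/(k! 2^k)) ∑_{σ ∈ S_{2k}} ∏_{j=1}^k M_{σ(2j-1), σ(2j)}` for `n = 2k`. -/
noncomputable def hafnian {n : ℕ} (M : Matrix (Fin n) (Fin n) ℝ) : ℝ :=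
  if Even n then
    (1 / ((n / 2).factorial * 2 ^ (n / 2) : ℝ)) *
      ∑ σ : Equiv.Perm (Fin n), ∏ j : Fin (n / 2),
        M (σ ⟨2 * j.1, by have := j.2; omega⟩) (σ ⟨2 * j.1 + 1, by have := j.2; omega⟩)
  else 0

section HafnianBounds
open Stirling Real Finset Filter Nat

lemma step_bound (m : ℕ) :
    Real.log (stirlingSeq (m + 1)) - Real.log (stirlingSeq (m + 2)) ≤
      1 / 12 * (1 / ((m : ℝ) + 1) - 1 / ((m : ℝ) + 2)) := by
  have h_nonneg : (0 : ℝ) ≤ ((1 : ℝ) / (2 * ↑(m + 1) + 1)) ^ 2 := sq_nonneg _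
  have hx1 : ((1 : ℝ) / (2 * ↑(m + 1) + 1)) ^ 2 < 1 := by
    rw [one_div, inv_pow]
    exact inv_lt_one_of_one_lt₀ (one_lt_pow₀ (lt_add_of_pos_left _ <| by positivity) two_ne_zero)
  have g : HasSum (fun k : ℕ => (1/3 : ℝ) * (((1 : ℝ) / (2 * ↑(m + 1) + 1)) ^ 2) ^ (k + 1))
      ((1/3) * ((((1 : ℝ) / (2 * ↑(m + 1) + 1)) ^ 2) / (1 - ((1 : ℝ) / (2 * ↑(m + 1) + 1)) ^ 2))) := by
    have := (hasSum_geometric_of_lt_one h_nonneg hx1).mul_left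
      (((1 : ℝ) / (2 * ↑(m + 1) + 1)) ^ 2)
    simp_rw [← _root_.pow_succ'] at this
    exact this.mul_left (1/3)
  have hab : ∀ k : ℕ, (1 : ℝ) / (2 * ↑(k + 1) + 1) * ((1 / (2 * ↑(m + 1) + 1)) ^ 2) ^ (k + 1) ≤
      (1/3 : ℝ) * (((1 : ℝ) / (2 * ↑(m + 1) + 1)) ^ 2) ^ (k + 1) := by
    intro k
    have : (1 : ℝ) / (2 * ↑(k + 1) + 1) ≤ 1/3 := by
      rw [div_le_div_iff₀ (by positivity) (by norm_num)]
      push_cast; linarith [Nat.cast_nonneg (α := ℝ) k]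
    exact mul_le_mul_of_nonneg_right this (pow_nonneg h_nonneg _)
  have key := hasSum_le hab (log_stirlingSeq_diff_hasSum m) g
  refine key.trans (le_of_eq ?_)
  have h2 : (2 * ((m : ℝ) + 1) + 1) ≠ 0 := by positivity
  have h3 : 1 - ((1 : ℝ) / (2 * ↑(m + 1) + 1)) ^ 2 ≠ 0 := (sub_pos.mpr hx1).ne'
  have ha : ((m : ℝ) + 1) ≠ 0 := by positivity
  have hb : ((m : ℝ) + 2) ≠ 0 := by positivity
  have hc : (24 + (m:ℝ)*36 + (m:ℝ)^2*12) ≠ 0 := by positivity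
  push_cast at h3 ⊢
  field_simp [hc]
  linear_combination 3 * mul_inv_cancel₀ (show (8 + (m:ℝ)*12 + (m:ℝ)^2*4) ≠ 0 by positivity)

lemma tele (m j : ℕ) :
    Real.log (stirlingSeq (m + 1)) - Real.log (stirlingSeq (m + 1 + j)) ≤
      1 / 12 * (1 / ((m : ℝ) + 1) - 1 / ((m : ℝ) + 1 + j)) := by
  induction j with
  | zero => simp
  | succ j ih =>
    have hs := step_bound (m + j)
    have e1 : m + 1 + (j + 1) = (m + j) + 2 := by omega
    have e2 : m + 1 + j = (m + j) + 1 := by omega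
    rw [e1]
    rw [e2] at ih
    push_cast at ih hs ⊢
    ring_nf at ih hs ⊢
    linarith

lemma log_ratio (k : ℕ) (hk : 1 ≤ k) :
    Real.log (stirlingSeq k) - Real.log (stirlingSeq (2 * k)) ≤ 1/12 - 1/25 := by
  obtain ⟨m, rfl⟩ : ∃ m, k = m + 1 := ⟨k - 1, by omega⟩
  have ht := tele m (m + 1)
  have e : m + 1 + (m + 1) = 2 * (m + 1) := by omega
  rw [e] at ht
  refine ht.trans ?_
  have h1 : (0:ℝ) < (m:ℝ) + 1 := by positivity
  have h2 : (0:ℝ) < (m:ℝ) + 1 + ((m:ℝ) + 1) := by positivity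
  have heq : 1/((m:ℝ)+1) - 1/((m:ℝ)+1+(↑m+1)) = 1/(2*((m:ℝ)+1)) := by
    field_simp
    ring
  push_cast
  rw [heq]
  have : 1/(2*((m:ℝ)+1)) ≤ 1/2 := by
    rw [div_le_div_iff₀ (by positivity) (by norm_num)]
    linarith
  linarith

lemma s_pos (k : ℕ) (hk : 1 ≤ k) : 0 < stirlingSeq k := by
  obtain ⟨m, rfl⟩ : ∃ m, k = m + 1 := ⟨k - 1, by omega⟩
  exact stirlingSeq'_pos m

lemma s_lower (k : ℕ) (hk : 1 ≤ k) :
    stirlingSeq k * Real.exp (1/25 - 1/12) ≤ stirlingSeq (2*k) := by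
  have h1 := s_pos k hk
  have h2 := s_pos (2*k) (by omega)
  have hl := log_ratio k hk
  have hlog : Real.log (stirlingSeq k * Real.exp (1/25-1/12)) ≤ Real.log (stirlingSeq (2*k)) := by
    rw [Real.log_mul h1.ne' (Real.exp_ne_zero _), Real.log_exp]
    linarith
  exact (Real.log_le_log_iff (by positivity) h2).mp hlog

lemma s_upper (k : ℕ) (hk : 1 ≤ k) : stirlingSeq (2*k) ≤ stirlingSeq k := by
  obtain ⟨m, rfl⟩ : ∃ m, k = m + 1 := ⟨k - 1, by omega⟩
  have h := Stirling.stirlingSeq'_antitone (show m ≤ 2*m+1 by omega)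
  simp only [Function.comp, Nat.succ_eq_add_one] at h
  have h2 : 2*(m+1) = (2*m+1)+1 := by ring
  rw [h2]
  exact h

lemma fact_eq (n : ℕ) (hn : 1 ≤ n) :
    (n ! : ℝ) = stirlingSeq n * (Real.sqrt (2*(n:ℝ)) * ((n : ℝ)/Real.exp 1)^n) := by
  have h0 : (0:ℝ) < n := by exact_mod_cast hn
  rw [stirlingSeq, div_mul_cancel₀]
  positivity

lemma ratio_eq (k : ℕ) (hk : 1 ≤ k) :
    ((2*k)! : ℝ) / ((k)! * 2^k) =
      Real.sqrt 2 * (stirlingSeq (2*k)/stirlingSeq k) * ((2*(k:ℝ))/Real.exp 1)^k := by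
  have hk0 : (0:ℝ) < k := by exact_mod_cast hk
  have h1 := fact_eq k hk
  have h2 := fact_eq (2*k) (by omega)
  rw [h1, h2]
  push_cast
  have hs : Real.sqrt (2*(2*(k:ℝ))) = Real.sqrt 2 * Real.sqrt (2*(k:ℝ)) :=
    Real.sqrt_mul (by norm_num) _
  have hp : ((2*(k:ℝ))/Real.exp 1)^(2*k) = ((2*(k:ℝ))/Real.exp 1)^k * ((2*(k:ℝ))/Real.exp 1)^k := by
    rw [two_mul k, pow_add]
  have hp2 : ((2*(k:ℝ))/Real.exp 1)^k = 2^k * ((k:ℝ)/Real.exp 1)^k := by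
    rw [mul_div_assoc, mul_pow]
  have hsk : Real.sqrt (2*(k:ℝ)) ≠ 0 := by positivity
  have hss : stirlingSeq k ≠ 0 := (s_pos k hk).ne'
  have hke : ((k:ℝ)/Real.exp 1)^k ≠ 0 := by positivity
  have h2k : ((2:ℝ))^k ≠ 0 := by positivity
  rw [hs, hp, hp2]
  field_simp

lemma R_le (k : ℕ) (hk : 1 ≤ k) :
    ((2*k)! : ℝ) / ((k)! * 2^k) ≤ Real.sqrt 2 * ((2*(k:ℝ))/Real.exp 1)^k := by
  rw [ratio_eq k hk]
  have h1 := s_pos k hk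
  have hle : stirlingSeq (2*k)/stirlingSeq k ≤ 1 := (div_le_one h1).mpr (s_upper k hk)
  have hX : (0:ℝ) ≤ ((2*(k:ℝ))/Real.exp 1)^k := by positivity
  have := mul_le_mul_of_nonneg_right
    (mul_le_mul_of_nonneg_left hle (Real.sqrt_nonneg 2)) hX
  simpa using this

lemma R_ge (k : ℕ) (hk : 1 ≤ k) :
    Real.sqrt 2 * Real.exp (1/25-1/12) * ((2*(k:ℝ))/Real.exp 1)^k ≤
      ((2*k)! : ℝ) / ((k)! * 2^k) := by
  rw [ratio_eq k hk]
  have h1 := s_pos k hk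
  have hge : Real.exp (1/25-1/12) ≤ stirlingSeq (2*k)/stirlingSeq k := by
    rw [le_div_iff₀ h1, mul_comm]
    exact s_lower k hk
  have hX : (0:ℝ) ≤ ((2*(k:ℝ))/Real.exp 1)^k := by positivity
  exact mul_le_mul_of_nonneg_right
    (mul_le_mul_of_nonneg_left hge (Real.sqrt_nonneg 2)) hX


/-- For a real `2k × 2k` symmetric matrix `M` (with `k ≥ 1`) all of whose entries have
absolute value at most `m_max`, `|Haf(M)| ≤ √2 (2k m_max / e)^k`; and if moreover all
entries are at least `m_min > 0`, then `Haf(M) ≥ √2 e^{1/25 - 1/12} (2k m_min / e)^k`. -/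
theorem hafnian_stirling_bounds (k : ℕ) (hk : 1 ≤ k)
    (M : Matrix (Fin (2 * k)) (Fin (2 * k)) ℝ) (hsym : M.IsSymm)
    (mmax : ℝ) (hub : ∀ i j, |M i j| ≤ mmax) :
    |hafnian M| ≤ Real.sqrt 2 * (2 * k * mmax / Real.exp 1) ^ k ∧
      ∀ mmin : ℝ, 0 < mmin → (∀ i j, mmin ≤ M i j) →
        Real.sqrt 2 * Real.exp (1 / 25 - 1 / 12) * (2 * k * mmin / Real.exp 1) ^ k
          ≤ hafnian M := by
  have hEven : Even (2*k) := even_two_mul k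
  have hd : 2*k/2 = k := by omega
  have hHaf : hafnian M = (1 / (((2*k) / 2).factorial * 2 ^ ((2*k) / 2) : ℝ)) *
      ∑ σ : Equiv.Perm (Fin (2*k)), ∏ j : Fin ((2*k) / 2),
        M (σ ⟨2 * j.1, by have := j.2; omega⟩) (σ ⟨2 * j.1 + 1, by have := j.2; omega⟩) := by
    unfold hafnian
    rw [if_pos hEven]
  set P : Equiv.Perm (Fin (2*k)) → ℝ := fun σ => ∏ j : Fin ((2*k) / 2),
        M (σ ⟨2 * j.1, by have := j.2; omega⟩) (σ ⟨2 * j.1 + 1, by have := j.2; omega⟩) with hPdef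
  have hc : (1 / (((2*k) / 2).factorial * 2 ^ ((2*k) / 2) : ℝ)) = 1/((k)! * 2^k : ℝ) := by
    rw [hd]
  have hcpos : (0:ℝ) < 1/((k)! * 2^k : ℝ) := by positivity
  rw [hHaf, hc]
  have hcards : (Finset.univ : Finset (Fin ((2*k)/2))).card = k := by
    simp [hd]
  have hcardp : (Finset.univ : Finset (Equiv.Perm (Fin (2*k)))).card = (2*k)! := by
    simp [Finset.card_univ, Fintype.card_perm, Fintype.card_fin]
  have hm0 : 0 ≤ mmax := le_trans (abs_nonneg _) (hub ⟨0, by omega⟩ ⟨0, by omega⟩)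
  constructor
  · -- upper bound
    have hP : ∀ σ, |P σ| ≤ mmax ^ k := by
      intro σ
      rw [hPdef, Finset.abs_prod]
      calc ∏ j : Fin ((2*k)/2), |M _ _| ≤ ∏ j : Fin ((2*k)/2), mmax :=
            Finset.prod_le_prod (fun _ _ => abs_nonneg _) (fun j _ => hub _ _)
        _ = mmax ^ k := by rw [Finset.prod_const, hcards]
    have hS : |∑ σ, P σ| ≤ ((2*k)! : ℝ) * mmax ^ k := by
      refine (Finset.abs_sum_le_sum_abs _ _).trans ?_
      have := Finset.sum_le_card_nsmul Finset.univ (fun σ => |P σ|) (mmax ^ k)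
        (fun σ _ => hP σ)
      rw [hcardp, nsmul_eq_mul] at this
      exact this
    rw [abs_mul, abs_of_pos hcpos]
    calc 1/((k)! * 2^k : ℝ) * |∑ σ, P σ|
        ≤ 1/((k)! * 2^k : ℝ) * (((2*k)! : ℝ) * mmax ^ k) := by
          exact mul_le_mul_of_nonneg_left hS hcpos.le
      _ = (((2*k)! : ℝ) / ((k)! * 2^k)) * mmax ^ k := by ring
      _ ≤ (Real.sqrt 2 * ((2*(k:ℝ))/Real.exp 1)^k) * mmax ^ k :=
          mul_le_mul_of_nonneg_right (R_le k hk) (pow_nonneg hm0 k)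
      _ = Real.sqrt 2 * (2 * k * mmax / Real.exp 1) ^ k := by
          rw [mul_assoc, ← mul_pow, div_mul_eq_mul_div]
  · -- lower bound
    intro mmin hmin hlow
    have hPl : ∀ σ, mmin ^ k ≤ P σ := by
      intro σ
      rw [hPdef]
      calc mmin ^ k = ∏ j : Fin ((2*k)/2), mmin := by rw [Finset.prod_const, hcards]
        _ ≤ _ := Finset.prod_le_prod (fun _ _ => hmin.le) (fun j _ => hlow _ _)
    have hS : ((2*k)! : ℝ) * mmin ^ k ≤ ∑ σ, P σ := by
      have := Finset.card_nsmul_le_sum Finset.univ P (mmin ^ k) (fun σ _ => hPl σ)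
      rw [hcardp, nsmul_eq_mul] at this
      exact this
    calc Real.sqrt 2 * Real.exp (1 / 25 - 1 / 12) * (2 * k * mmin / Real.exp 1) ^ k
        = (Real.sqrt 2 * Real.exp (1/25-1/12) * ((2*(k:ℝ))/Real.exp 1)^k) * mmin ^ k := by
          rw [mul_assoc (Real.sqrt 2 * Real.exp (1/25-1/12)), ← mul_pow, div_mul_eq_mul_div]
      _ ≤ (((2*k)! : ℝ) / ((k)! * 2^k)) * mmin ^ k :=
          mul_le_mul_of_nonneg_right (R_ge k hk) (pow_nonneg hmin.le k)
      _ = 1/((k)! * 2^k : ℝ) * (((2*k)! : ℝ) * mmin ^ k) := by ring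
      _ ≤ 1/((k)! * 2^k : ℝ) * ∑ σ, P σ := mul_le_mul_of_nonneg_left hS hcpos.le

end HafnianBounds
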